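/- For the cost function g(x) = k(x,x) − 2k(x,y) − 2 Σ_{i=1}^n β_i [k(x,z_i) − μ_z(x)] with k differentiable positive definite, the gradient at x = y satisfies ∇_x g(x)|_{x=y} = − M_{z,y} H β, where M_{z,y} = 2[∇_x k(x,z_1)|_{x=y}, ..., ∇_x k(x,z_n)|_{x=y}] is the d×n matrix of kernel gradients and H = I − (1/n) 1_{n×n} is the centering matrix. -/

import Mathlib

open RealInnerProductSpace

/-- For the cost `g(x) = k(x,x) − 2k(x,y) − 2 Σᵢ βᵢ [k(x,zᵢ) − μ_z(x)]` with `k` a differentiable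
positive definite kernel, `∇ₓ g(x)|_{x=y} = −M_{z,y} H β`, where `M_{z,y}` has columns
`2∇ₓ k(x,zⱼ)|_{x=y}` and `H = I − (1/n)𝟙` is the centering matrix. -/
theorem stmt5 {d n : ℕ} (hn : 0 < n)
    (k : EuclideanSpace ℝ (Fin d) → EuclideanSpace ℝ (Fin d) → ℝ)
    (hsymm : ∀ x x', k x x' = k x' x)
    (hpd : ∀ (m : ℕ) (x : Fin m → EuclideanSpace ℝ (Fin d)) (c : Fin m → ℝ),
      0 ≤ ∑ i, ∑ j, c i * c j * k (x i) (x j))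
    (hdiff : Differentiable ℝ
      (fun p : EuclideanSpace ℝ (Fin d) × EuclideanSpace ℝ (Fin d) => k p.1 p.2))
    (y : EuclideanSpace ℝ (Fin d)) (z : Fin n → EuclideanSpace ℝ (Fin d)) (β : Fin n → ℝ) :
    gradient (fun x => k x x - 2 * k x y
        - 2 * ∑ i, β i * (k x (z i) - (n : ℝ)⁻¹ * ∑ j, k x (z j))) y
      = - ∑ j, (((1 : Matrix (Fin n) (Fin n) ℝ)
            - (n : ℝ)⁻¹ • Matrix.of fun _ _ => (1 : ℝ)).mulVec β j)
          • ((2 : ℝ) • gradient (fun x => k x (z j)) y) := by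
  -- differentiability of sections
  have hdw : ∀ w : EuclideanSpace ℝ (Fin d), Differentiable ℝ (fun x => k x w) := fun w =>
    hdiff.comp (differentiable_id.prodMk (differentiable_const w))
  have hdxx : Differentiable ℝ (fun x : EuclideanSpace ℝ (Fin d) => k x x) :=
    hdiff.comp (differentiable_id.prodMk differentiable_id)
  -- the quadratic part has a global minimum at y
  have hmin : ∀ x : EuclideanSpace ℝ (Fin d),
      k y y - 2 * k y y ≤ k x x - 2 * k x y := by
    intro x
    have := hpd 2 ![x, y] ![1, -1]
    simp [Fin.sum_univ_two, hsymm y x] at this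
    linarith [this]
  have hf1 : HasFDerivAt (fun x : EuclideanSpace ℝ (Fin d) => k x x - 2 * k x y)
      (0 : EuclideanSpace ℝ (Fin d) →L[ℝ] ℝ) y := by
    have hdf1 : Differentiable ℝ (fun x : EuclideanSpace ℝ (Fin d) => k x x - 2 * k x y) :=
      hdxx.sub ((hdw y).const_mul 2)
    have hloc : IsLocalMin (fun x : EuclideanSpace ℝ (Fin d) => k x x - 2 * k x y) y :=
      Filter.Eventually.of_forall hmin
    have := hloc.fderiv_eq_zero
    rw [← this]
    exact (hdf1 y).hasFDerivAt
  -- fderiv of each kernel section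
  set D : Fin n → (EuclideanSpace ℝ (Fin d) →L[ℝ] ℝ) :=
    fun j => fderiv ℝ (fun x => k x (z j)) y with hD
  have hDj : ∀ j, HasFDerivAt (fun x => k x (z j)) (D j) y := fun j =>
    ((hdw (z j)) y).hasFDerivAt
  -- derivative of the whole thing
  have hmain : HasFDerivAt (fun x => k x x - 2 * k x y
        - 2 * ∑ i, β i * (k x (z i) - (n : ℝ)⁻¹ * ∑ j, k x (z j)))
      ((0 : EuclideanSpace ℝ (Fin d) →L[ℝ] ℝ)
        - (2:ℝ) • ∑ i, β i • (D i - (n : ℝ)⁻¹ • ∑ j, D j)) y := by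
    refine hf1.sub ?_
    refine HasFDerivAt.const_mul ?_ 2
    refine HasFDerivAt.fun_sum fun i _ => ?_
    refine HasFDerivAt.const_mul ?_ (β i)
    exact (hDj i).sub (HasFDerivAt.const_mul (HasFDerivAt.fun_sum fun j _ => hDj j) _)
  -- pass to gradients
  have hgrad := hmain.hasGradientAt
  rw [hgrad.gradient]
  set g : Fin n → EuclideanSpace ℝ (Fin d) := fun j => gradient (fun x => k x (z j)) y with hgdef
  have hg : ∀ j, gradient (fun x => k x (z j)) y = g j := fun _ => rfl
  have hg' : ∀ j, g j
      = (InnerProductSpace.toDual ℝ (EuclideanSpace ℝ (Fin d))).symm (D j) := fun j => rfl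
  simp only [hg]
  have hsymmlin : (InnerProductSpace.toDual ℝ (EuclideanSpace ℝ (Fin d))).symm
        ((0 : EuclideanSpace ℝ (Fin d) →L[ℝ] ℝ)
          - (2:ℝ) • ∑ i, β i • (D i - (n : ℝ)⁻¹ • ∑ j, D j))
      = (0 : EuclideanSpace ℝ (Fin d))
          - (2:ℝ) • ∑ i, β i • (g i - (n : ℝ)⁻¹ • ∑ j, g j) := by
    simp only [map_sub, map_zero, map_smul, map_sum, hg']
  rw [hsymmlin]
  -- matrix algebra on the RHS
  have hmul : ∀ j, (((1 : Matrix (Fin n) (Fin n) ℝ)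
        - (n : ℝ)⁻¹ • Matrix.of fun _ _ => (1 : ℝ)).mulVec β j)
      = β j - (n : ℝ)⁻¹ * ∑ i, β i := by
    intro j
    simp [Matrix.sub_mulVec, Matrix.one_mulVec, Matrix.smul_mulVec,
      Matrix.mulVec, dotProduct, Matrix.one_apply, sub_mul, ite_mul,
      Finset.sum_sub_distrib, Finset.mul_sum]
  simp only [hmul]
  -- vector algebra
  have h2 : ∑ i, β i • ((n:ℝ)⁻¹ • ∑ j, g j) = ∑ j, ((n:ℝ)⁻¹ * ∑ i, β i) • g j := by
    rw [← Finset.sum_smul, smul_smul, mul_comm (∑ i, β i) ((n:ℝ)⁻¹), Finset.smul_sum]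
  have h3 : ∀ x : Fin n, (β x - (n:ℝ)⁻¹ * ∑ i, β i) • ((2:ℝ) • g x)
      = (2:ℝ) • (β x • g x) - (2:ℝ) • (((n:ℝ)⁻¹ * ∑ i, β i) • g x) := by
    intro x
    rw [smul_smul, smul_smul, smul_smul, ← sub_smul]
    congr 1
    ring
  simp only [smul_sub, Finset.sum_sub_distrib, h2, h3, ← Finset.smul_sum, zero_sub]
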